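/- With up^[n] defined by up^[1] = ↑ and up^[n] = {up^[n-1] | *}, for every n ≥ 1 the game up^[n] is incomparable (fuzzy) with * = {0|0}. -/

import Mathlib

universe u

namespace SetTheory

/-- Pre-games, as formerly in Mathlib (`SetTheory.PGame`, since removed from Mathlib). -/
inductive PGame : Type (u + 1)
  | mk : ∀ α β : Type u, (α → PGame) → (β → PGame) → PGame

namespace PGame

/-- The pre-game with the given lists of left and right options (old Mathlib definition). -/
def ofLists (L R : List PGame.{u}) : PGame.{u} :=
  mk (ULift (Fin L.length)) (ULift (Fin R.length)) (fun i => L[i.down]) fun j => R[j.down]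

instance : Zero PGame := ⟨⟨PEmpty, PEmpty, PEmpty.elim, PEmpty.elim⟩⟩

noncomputable instance : Add PGame.{u} :=
  ⟨fun x y => by
    induction x generalizing y with | mk xl xr _ _ IHxl IHxr => _
    induction y with | mk yl yr yL yR IHyl IHyr => _
    have y := mk yl yr yL yR
    refine ⟨xl ⊕ yl, xr ⊕ yr, Sum.rec ?_ ?_, Sum.rec ?_ ?_⟩
    · exact fun i => IHxl i y
    · exact IHyl
    · exact fun i => IHxr i y
    · exact IHyr⟩

/-- The pair (x ≤ y, x ⧏ y), by the usual mutual recursion on both games. -/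
noncomputable def leLf : PGame.{u} → PGame.{u} → Prop × Prop := fun x => by
  induction x with | mk xl xr xL xR IHxl IHxr => _
  intro y
  induction y with | mk yl yr yL yR IHyl IHyr => _
  exact ((∀ i, (IHxl i (mk yl yr yL yR)).2) ∧ (∀ j, (IHyr j).2),
    (∃ i, (IHyl i).1) ∨ (∃ j, (IHxr j (mk yl yr yL yR)).1))

instance : LE PGame.{u} := ⟨fun x y => (leLf x y).1⟩

end PGame

end SetTheory

open SetTheory PGame

/-- star = {0|0} -/
noncomputable def star' : PGame := PGame.ofLists [0] [0]
/-- up = {0|*} -/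
noncomputable def up' : PGame := PGame.ofLists [0] [star']
/-- down = {*|0} -/
noncomputable def down' : PGame := PGame.ofLists [star'] [0]

/-- sum of n copies of up -/
noncomputable def nUp : ℕ → PGame
  | 0 => 0
  | n + 1 => nUp n + up'

/-- sum of n copies of down -/
noncomputable def nDown : ℕ → PGame
  | 0 => 0
  | n + 1 => nDown n + down'

/-- iterated up: up^[1] = ↑, up^[n] = {up^[n-1] | *} -/
noncomputable def upIter : ℕ → PGame
  | 0 => 0
  | 1 => up'
  | n + 2 => PGame.ofLists [upIter (n + 1)] [star']

/-- iterated down: down_[1] = ↓, down_[n] = {* | down_[n-1]} -/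
noncomputable def downIter : ℕ → PGame
  | 0 => 0
  | 1 => down'
  | n + 2 => PGame.ofLists [star'] [downIter (n + 1)]

lemma star_not_le_zero : ¬ (PGame.leLf star' 0).1 := by
  intro h
  have h1 := h.1 ⟨0, by simp⟩
  rcases h1 with ⟨⟨⟩, _⟩ | ⟨⟨⟩, _⟩

lemma zero_not_le_star : ¬ (PGame.leLf 0 star').1 := by
  intro h
  have h1 := h.2 ⟨0, by simp⟩
  rcases h1 with ⟨⟨⟩, _⟩ | ⟨⟨⟩, _⟩

lemma star_not_lf_star : ¬ (PGame.leLf star' star').2 := by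
  rintro (⟨⟨i, hi⟩, h⟩ | ⟨⟨j, hj⟩, h⟩)
  · have : i = 0 := by simp at hi; omega
    subst this
    exact star_not_le_zero h
  · have : j = 0 := by simp at hj; omega
    subst this
    exact zero_not_le_star h

theorem stmt6 (n : ℕ) (hn : 1 ≤ n) :
    ¬ upIter n ≤ star' ∧ ¬ star' ≤ upIter n := by
  match n, hn with
  | 1, _ =>
    constructor
    · intro h
      rcases h.2 ⟨0, by simp⟩ with ⟨⟨⟩, _⟩ | ⟨⟨j, hj⟩, h'⟩
      have : j = 0 := by simp at hj; omega
      subst this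
      exact star_not_le_zero h'
    · intro h
      exact star_not_lf_star (h.2 ⟨0, by simp⟩)
  | (m + 2), _ =>
    constructor
    · intro h
      rcases h.2 ⟨0, by simp⟩ with ⟨⟨⟩, _⟩ | ⟨⟨j, hj⟩, h'⟩
      have : j = 0 := by simp at hj; omega
      subst this
      exact star_not_le_zero h'
    · intro h
      exact star_not_lf_star (h.2 ⟨0, by simp⟩)
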